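/- For all real x ≥ 17 and all real y ≥ 2, one has 1 + (x−2)^y > 4^y + (x−3)^y. -/

import Mathlib

theorem stmt_5 (x y : ℝ) (hx : 17 ≤ x) (hy : 2 ≤ y) :
    1 + (x - 2) ^ y > (4 : ℝ) ^ y + (x - 3) ^ y := by
  have ha : (14 : ℝ) ≤ x - 3 := by linarith
  set a := x - 3 with hA
  have ha0 : (0 : ℝ) < a := by linarith
  have hy1 : (1 : ℝ) ≤ y := by linarith
  -- Bernoulli
  have hB : 1 + y * (1 / a) ≤ (1 + 1 / a) ^ y :=
    one_add_mul_self_le_rpow_one_add (le_trans (by norm_num) (le_of_lt (by positivity : (0:ℝ) < 1/a))) hy1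
  have hx2 : x - 2 = a * (1 + 1 / a) := by field_simp; linarith [hA]
  have hmul : (x - 2) ^ y = a ^ y * (1 + 1 / a) ^ y := by
    rw [hx2, Real.mul_rpow ha0.le (by positivity)]
  have hdiff : a ^ y * (1 + y * (1 / a)) ≤ (x - 2) ^ y := by
    rw [hmul]
    exact mul_le_mul_of_nonneg_left hB (Real.rpow_nonneg ha0.le y)
  have hpow : a ^ y / a = a ^ (y - 1) := by
    rw [Real.rpow_sub ha0, Real.rpow_one]
  have key : a ^ y + y * a ^ (y - 1) ≤ (x - 2) ^ y := by
    have h1 : a ^ y * (1 + y * (1 / a)) = a ^ y + y * (a ^ y / a) := by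
      field_simp
    rw [h1, hpow] at hdiff
    exact hdiff
  have h14 : (14 : ℝ) ^ (y - 1) ≤ a ^ (y - 1) :=
    Real.rpow_le_rpow (by norm_num) ha (by linarith)
  have hy14 : 2 * (14 : ℝ) ^ (y - 1) ≤ y * a ^ (y - 1) :=
    mul_le_mul hy h14 (Real.rpow_nonneg (by norm_num) _) (by linarith)
  have h35 : (3.5 : ℝ) ≤ (3.5 : ℝ) ^ (y - 1) := by
    calc (3.5 : ℝ) = (3.5 : ℝ) ^ (1 : ℝ) := (Real.rpow_one _).symm
    _ ≤ (3.5 : ℝ) ^ (y - 1) :=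
      Real.rpow_le_rpow_of_exponent_le (by norm_num) (by linarith)
  have hsplit : (14 : ℝ) ^ (y - 1) = 4 ^ (y - 1) * (3.5 : ℝ) ^ (y - 1) := by
    rw [← Real.mul_rpow (by norm_num) (by norm_num)]
    norm_num
  have h4 : (4 : ℝ) ^ y = 4 * 4 ^ (y - 1) := by
    rw [show y = 1 + (y - 1) by ring, Real.rpow_add (by norm_num), Real.rpow_one]
    ring_nf
  have h4pos : (0 : ℝ) < (4 : ℝ) ^ (y - 1) := Real.rpow_pos_of_pos (by norm_num) _
  nlinarith [key, hy14, h35, hsplit, h4, h4pos]
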